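/- arXiv:2212.12255 — 5 statements merged into one kernel-verified Lean document; each statement's English description precedes it below -/
import Mathlib

section
/- For all real a, b > 0 one has tanh(a + b) < tanh(a) + tanh(b). Consequently, for any h > 0 and any nonzero integers j₁, j₂, j₃ with j₁ + j₂ + j₃ = 0, one has tanh(h j₁) + tanh(h j₂) + tanh(h j₃) ≠ 0. -/
open Real

private lemma tanh_pos' {x : ℝ} (hx : 0 < x) : 0 < Real.tanh x := by
  rw [Real.tanh_eq_sinh_div_cosh]
  exact div_pos (Real.sinh_pos_iff.2 hx) (Real.cosh_pos x)

private lemma tanh_subadd {a b : ℝ} (ha : 0 < a) (hb : 0 < b) :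
    Real.tanh (a + b) < Real.tanh a + Real.tanh b := by
  have key : Real.tanh a + Real.tanh b
      = Real.tanh (a + b) * (1 + Real.tanh a * Real.tanh b) := by
    rw [Real.tanh_eq_sinh_div_cosh, Real.tanh_eq_sinh_div_cosh,
      Real.tanh_eq_sinh_div_cosh, Real.sinh_add, Real.cosh_add]
    have h1 := (Real.cosh_pos a).ne'
    have h2 := (Real.cosh_pos b).ne'
    have h3 : Real.cosh a * Real.cosh b + Real.sinh a * Real.sinh b ≠ 0 := by
      rw [← Real.cosh_add]; exact (Real.cosh_pos _).ne'
    field_simp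
  have hpos : 0 < Real.tanh a * Real.tanh b :=
    mul_pos (tanh_pos' ha) (tanh_pos' hb)
  have htab : 0 < Real.tanh (a + b) := tanh_pos' (by linarith)
  nlinarith

private lemma key3 {a b c : ℝ} (ha : a ≠ 0) (hb : b ≠ 0) (hc : c ≠ 0)
    (hsum : a + b + c = 0) : Real.tanh a + Real.tanh b + Real.tanh c ≠ 0 := by
  have main : ∀ x y : ℝ, 0 < x → 0 < y →
      Real.tanh x + Real.tanh y + Real.tanh (-(x + y)) ≠ 0 := by
    intro x y hx hy
    rw [Real.tanh_neg]
    have := tanh_subadd hx hy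
    linarith
  rcases ha.lt_or_gt with ha' | ha' <;> rcases hb.lt_or_gt with hb' | hb' <;>
    rcases hc.lt_or_gt with hc' | hc'
  · linarith
  · have := main (-a) (-b) (by linarith) (by linarith)
    rw [Real.tanh_neg, Real.tanh_neg, neg_add, neg_neg, neg_neg,
      show a + b = -c by linarith, Real.tanh_neg] at this
    intro h; apply this; linarith
  · have := main (-a) (-c) (by linarith) (by linarith)
    rw [Real.tanh_neg, Real.tanh_neg, neg_add, neg_neg, neg_neg,
      show a + c = -b by linarith, Real.tanh_neg] at this
    intro h; apply this; linarith
  · have := main b c hb' hc'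
    rw [show -(b + c) = a by linarith] at this
    intro h; apply this; linarith
  · have := main (-b) (-c) (by linarith) (by linarith)
    rw [Real.tanh_neg, Real.tanh_neg, neg_add, neg_neg, neg_neg,
      show b + c = -a by linarith, Real.tanh_neg] at this
    intro h; apply this; linarith
  · have := main a c ha' hc'
    rw [show -(a + c) = b by linarith] at this
    intro h; apply this; linarith
  · have := main a b ha' hb'
    rw [show -(a + b) = c by linarith] at this
    intro h; apply this; linarith
  · linarith

/-- Strict subadditivity of `tanh` on positive reals and the finite-depth
six-wave vorticity non-resonance. -/
theorem tanh_strict_subadditive_and_nonresonance :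
    (∀ a b : ℝ, 0 < a → 0 < b → Real.tanh (a + b) < Real.tanh a + Real.tanh b) ∧
    ∀ h : ℝ, 0 < h → ∀ j₁ j₂ j₃ : ℤ, j₁ ≠ 0 → j₂ ≠ 0 → j₃ ≠ 0 → j₁ + j₂ + j₃ = 0 →
      Real.tanh (h * j₁) + Real.tanh (h * j₂) + Real.tanh (h * j₃) ≠ 0 := by
  constructor
  · exact fun a b ha hb => tanh_subadd ha hb
  · intro h hh j₁ j₂ j₃ h1 h2 h3 hsum
    apply key3
    · exact mul_ne_zero hh.ne' (Int.cast_ne_zero.2 h1)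
    · exact mul_ne_zero hh.ne' (Int.cast_ne_zero.2 h2)
    · exact mul_ne_zero hh.ne' (Int.cast_ne_zero.2 h3)
    · have : ((j₁:ℝ) + j₂ + j₃) = 0 := by exact_mod_cast hsum
      nlinarith [this]
end

section
/- Let g > 0, γ ∈ ℝ, h > 0. Then for every real y ≥ 1, the derivative of the function f(y) = y³ / (g·y + (γ²/4)·tanh(h·y)) satisfies f′(y) ≥ 16·g / (16·g² + γ⁴) > 0. -/
open Real

lemma hasDerivAt_tanh' (x : ℝ) :
    HasDerivAt Real.tanh (1 / Real.cosh x ^ 2) x := by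
  have h : Real.tanh = fun x => Real.sinh x / Real.cosh x := by
    funext x; exact Real.tanh_eq_sinh_div_cosh x
  rw [h]
  have hc : Real.cosh x ≠ 0 := (Real.cosh_pos x).ne'
  have := (Real.hasDerivAt_sinh x).div (Real.hasDerivAt_cosh x) hc
  refine this.congr_deriv ?_
  have := Real.cosh_sq_sub_sinh_sq x
  congr 1
  nlinarith [Real.cosh_sq_sub_sinh_sq x]

lemma key_ineq {x : ℝ} (hx : 0 < x) :
    x * (1 / Real.cosh x ^ 2) ≤ Real.tanh x := by
  have hc : 0 < Real.cosh x := Real.cosh_pos x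
  have hs : x < Real.sinh x := (Real.self_lt_sinh_iff).mpr hx
  have h1 : 1 ≤ Real.cosh x := Real.one_le_cosh x
  have hsp : 0 < Real.sinh x := lt_trans hx hs
  have h2 : x ≤ Real.sinh x * Real.cosh x := by nlinarith
  rw [Real.tanh_eq_sinh_div_cosh]
  calc x * (1 / Real.cosh x ^ 2) = x / Real.cosh x ^ 2 := by ring
    _ ≤ (Real.sinh x * Real.cosh x) / Real.cosh x ^ 2 := by gcongr
    _ = Real.sinh x / Real.cosh x := by field_simp

set_option maxHeartbeats 1000000 in
/-- Uniform lower bound on the derivative of `y ↦ y³ / (g y + (γ²/4) tanh (h y))`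
for `y ≥ 1`. -/
theorem deriv_lower_bound (g γ h : ℝ) (hg : 0 < g) (hh : 0 < h) :
    0 < 16 * g / (16 * g ^ 2 + γ ^ 4) ∧
    ∀ y : ℝ, 1 ≤ y →
      16 * g / (16 * g ^ 2 + γ ^ 4) ≤
        deriv (fun y : ℝ => y ^ 3 / (g * y + γ ^ 2 / 4 * Real.tanh (h * y))) y := by
  constructor
  · positivity
  intro y hy
  have hy0 : 0 < y := lt_of_lt_of_le one_pos hy
  have hhy : 0 < h * y := by positivity
  set T := Real.tanh (h * y) with hT
  have hT0 : 0 < T := by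
    rw [hT, Real.tanh_eq_sinh_div_cosh]
    exact div_pos (Real.sinh_pos_iff.mpr hhy) (Real.cosh_pos _)
  have hT1 : T < 1 := by
    rw [hT, Real.tanh_eq_sinh_div_cosh]
    rw [div_lt_one (Real.cosh_pos _)]
    exact Real.sinh_lt_cosh (h * y)
  set S := 1 / Real.cosh (h * y) ^ 2 with hS
  have hS0 : 0 < S := by positivity
  have hkey : h * y * S ≤ T := key_ineq hhy
  set D := g * y + γ ^ 2 / 4 * T with hD
  have hD0 : 0 < D := by positivity
  have hDne : D ≠ 0 := hD0.ne'
  -- the derivative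
  have hderivD : HasDerivAt (fun y : ℝ => g * y + γ ^ 2 / 4 * Real.tanh (h * y))
      (g + γ ^ 2 / 4 * (S * h)) y := by
    have h1 : HasDerivAt (fun y : ℝ => Real.tanh (h * y)) (S * h) y := by
      have := (hasDerivAt_tanh' (h * y)).comp y
        ((hasDerivAt_id y).const_mul h)
      exact this.congr_deriv (by rw [hS]; ring)
    exact (((hasDerivAt_id y).const_mul g).add (h1.const_mul (γ ^ 2 / 4))).congr_deriv (by ring)
  have hderivN : HasDerivAt (fun y : ℝ => y ^ 3) (3 * y ^ 2) y := by
    simpa using hasDerivAt_pow 3 y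
  have hderiv : HasDerivAt (fun y : ℝ => y ^ 3 / (g * y + γ ^ 2 / 4 * Real.tanh (h * y)))
      ((3 * y ^ 2 * D - y ^ 3 * (g + γ ^ 2 / 4 * (S * h))) / D ^ 2) y :=
    hderivN.div hderivD hDne
  rw [hderiv.deriv]
  -- numerator lower bound
  have hnum : 2 * g * y ^ 3 ≤ 3 * y ^ 2 * D - y ^ 3 * (g + γ ^ 2 / 4 * (S * h)) := by
    have key2 : y ^ 3 * (γ ^ 2 / 4 * (S * h)) ≤ y ^ 2 * (γ ^ 2 / 4 * T) := by
      have h2 : γ ^ 2 / 4 * y ^ 2 * (h * y * S) ≤ γ ^ 2 / 4 * y ^ 2 * T :=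
        mul_le_mul_of_nonneg_left hkey (by positivity)
      calc y ^ 3 * (γ ^ 2 / 4 * (S * h)) = γ ^ 2 / 4 * y ^ 2 * (h * y * S) := by ring
        _ ≤ γ ^ 2 / 4 * y ^ 2 * T := h2
        _ = y ^ 2 * (γ ^ 2 / 4 * T) := by ring
    nlinarith [mul_pos (mul_pos hy0 hy0) hT0, sq_nonneg γ]
  have hDle : D ≤ g * y + γ ^ 2 / 4 := by
    have : γ ^ 2 / 4 * T ≤ γ ^ 2 / 4 * 1 := by nlinarith [sq_nonneg γ]
    simpa [hD] using add_le_add_left (by linarith) (g * y)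
  have hDsq : D ^ 2 ≤ (g * y + γ ^ 2 / 4) ^ 2 := pow_le_pow_left₀ hD0.le hDle 2
  have h1 : 2 * g * y ^ 3 / (g * y + γ ^ 2 / 4) ^ 2 ≤
      (3 * y ^ 2 * D - y ^ 3 * (g + γ ^ 2 / 4 * (S * h))) / D ^ 2 := by
    have hDp : (0:ℝ) < D ^ 2 := by positivity
    calc 2 * g * y ^ 3 / (g * y + γ ^ 2 / 4) ^ 2
        ≤ 2 * g * y ^ 3 / D ^ 2 := by gcongr <;> positivity
      _ ≤ _ := by gcongr
  refine le_trans ?_ h1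
  rw [div_le_div_iff₀ (by positivity) (by positivity)]
  have h3 : 0 ≤ y ^ 3 - y := by nlinarith
  have h4 : 0 ≤ y ^ 3 - y ^ 2 := by nlinarith
  have h5 : 0 ≤ y ^ 3 - 1 := by nlinarith
  nlinarith [mul_nonneg hg.le (mul_nonneg (pow_nonneg hy0.le 3) (sq_nonneg (4 * g - γ ^ 2))),
    mul_nonneg (mul_nonneg (mul_pos hg hg).le (sq_nonneg γ)) h3,
    mul_nonneg (mul_pos (mul_pos hg hg) hg).le h4,
    mul_nonneg (mul_nonneg hg.le (sq_nonneg (γ ^ 2))) h5]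
end

section
/- Let f ∈ ℝ with 1 + 2f > 0, and set λ = √(1 + 2f), D = (1 + f + λ)² − f², h = (1 + f + λ)/√D, g = −f/√D. Then D = (1 + 2f + λ)(1 + λ) > 0 and the following identities hold: (i) h² − g² = 1; (ii) (h² + g²)·(1 + f) + 2·h·g·f = λ; (iii) 2·h·g·(1 + f) + (h² + g²)·f = 0. -/
/-- Algebraic identities expressing that the matrix `F = [[h,g],[g,h]]` is
symplectic and diagonalizes the highest-order matrix symbol. -/
theorem diagonalization_identities (f : ℝ) (hf : 0 < 1 + 2 * f)
    (lam D h g : ℝ)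
    (hlam : lam = Real.sqrt (1 + 2 * f))
    (hD : D = (1 + f + lam) ^ 2 - f ^ 2)
    (hh : h = (1 + f + lam) / Real.sqrt D)
    (hg : g = -f / Real.sqrt D) :
    D = (1 + 2 * f + lam) * (1 + lam) ∧ 0 < D ∧
    h ^ 2 - g ^ 2 = 1 ∧
    (h ^ 2 + g ^ 2) * (1 + f) + 2 * h * g * f = lam ∧
    2 * h * g * (1 + f) + (h ^ 2 + g ^ 2) * f = 0 := by
  have hlampos : 0 < lam := hlam ▸ Real.sqrt_pos.mpr hf
  have hlamsq : lam ^ 2 = 1 + 2 * f := by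
    rw [hlam, Real.sq_sqrt hf.le]
  have hDfact : D = (1 + 2 * f + lam) * (1 + lam) := by
    rw [hD]; nlinarith [hlamsq]
  have hDpos : 0 < D := by
    rw [hDfact]; positivity
  have hsD : Real.sqrt D ^ 2 = D := Real.sq_sqrt hDpos.le
  have hsDpos : 0 < Real.sqrt D := Real.sqrt_pos.mpr hDpos
  have hh2 : h ^ 2 = (1 + f + lam) ^ 2 / D := by
    rw [hh, div_pow, hsD]
  have hg2 : g ^ 2 = f ^ 2 / D := by
    rw [hg, div_pow, hsD]; ring_nf
  have hhg : h * g = -(f * (1 + f + lam)) / D := by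
    rw [hh, hg, div_mul_div_comm, Real.mul_self_sqrt hDpos.le]; ring
  have hDne : D ≠ 0 := hDpos.ne'
  refine ⟨hDfact, hDpos, ?_, ?_, ?_⟩
  · rw [hh2, hg2, div_sub_div_same, hD, div_self]
    rw [← hD]; exact hDne
  · rw [hh2, hg2, mul_assoc 2 h g, hhg]
    field_simp
    linear_combination (-(1 + f + lam)) * hlamsq + (-lam) * hD
  · rw [hh2, hg2, mul_assoc 2 h g, hhg]
    field_simp
    linear_combination f * hlamsq
end

section
/- Let q ≥ 2, let n₁, …, n_q be natural numbers and σ₁, …, σ_q ∈ {−1, +1}, and let N = max_a n_a and N₂ be the second largest among n₁,…,n_q (counted with multiplicity). If 2·|Σ_{a=1}^q σ_a n_a| ≤ N, then N ≤ 2(q−1)·N₂. -/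
/-- Near-cancellation in a signed sum forces the largest frequency to be
comparable to the second largest. -/
theorem max_le_of_signed_sum_small (q : ℕ) (hq : 2 ≤ q) (n : Fin q → ℕ)
    (σ : Fin q → ℤ) (hσ : ∀ a, σ a = 1 ∨ σ a = -1)
    (a₀ : Fin q) (ha₀ : ∀ a, n a ≤ n a₀)
    (N₂ : ℕ) (hN₂ : N₂ = (Finset.univ.erase a₀).sup n)
    (hsmall : 2 * (∑ a, σ a * (n a : ℤ)).natAbs ≤ n a₀) :
    n a₀ ≤ 2 * (q - 1) * N₂ := by
  have hsplit : (σ a₀ * (n a₀ : ℤ)) =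
      (∑ a, σ a * (n a : ℤ)) - ∑ a ∈ Finset.univ.erase a₀, σ a * (n a : ℤ) := by
    rw [eq_sub_iff_add_eq]
    exact Finset.add_sum_erase _ (fun a => σ a * (n a : ℤ)) (Finset.mem_univ a₀)
  have habs : |σ a₀ * (n a₀ : ℤ)| = (n a₀ : ℤ) := by
    rcases hσ a₀ with h | h <;> simp [h, abs_of_nonneg]
  have hbound : |∑ a ∈ Finset.univ.erase a₀, σ a * (n a : ℤ)| ≤ ((q - 1) * N₂ : ℕ) := by
    calc |∑ a ∈ Finset.univ.erase a₀, σ a * (n a : ℤ)|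
        ≤ ∑ a ∈ Finset.univ.erase a₀, |σ a * (n a : ℤ)| := Finset.abs_sum_le_sum_abs _ _
      _ ≤ ∑ _a ∈ Finset.univ.erase a₀, (N₂ : ℤ) := by
          apply Finset.sum_le_sum
          intro a ha
          rcases hσ a with h | h
          · simp only [h, one_mul, abs_of_nonneg (by positivity : (0:ℤ) ≤ (n a : ℤ))]
            exact_mod_cast hN₂ ▸ Finset.le_sup ha
          · simp only [h, neg_one_mul, abs_neg,
              abs_of_nonneg (by positivity : (0:ℤ) ≤ (n a : ℤ))]
            exact_mod_cast hN₂ ▸ Finset.le_sup ha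
      _ = ((q - 1) * N₂ : ℕ) := by
          rw [Finset.sum_const, Finset.card_erase_of_mem (Finset.mem_univ a₀),
            Finset.card_univ, Fintype.card_fin]
          push_cast
          ring
  have hkey : (n a₀ : ℤ) ≤ ((∑ a, σ a * (n a : ℤ)).natAbs : ℤ) + ((q - 1) * N₂ : ℕ) := by
    calc (n a₀ : ℤ) = |σ a₀ * (n a₀ : ℤ)| := habs.symm
      _ = |(∑ a, σ a * (n a : ℤ)) - ∑ a ∈ Finset.univ.erase a₀, σ a * (n a : ℤ)| := by
          rw [hsplit]
      _ ≤ |∑ a, σ a * (n a : ℤ)| + |∑ a ∈ Finset.univ.erase a₀, σ a * (n a : ℤ)| :=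
          abs_sub _ _
      _ ≤ ((∑ a, σ a * (n a : ℤ)).natAbs : ℤ) + ((q - 1) * N₂ : ℕ) := by
          rw [Int.abs_eq_natAbs]
          exact add_le_add_right hbound _
  have hkey' : n a₀ ≤ (∑ a, σ a * (n a : ℤ)).natAbs + (q - 1) * N₂ := by exact_mod_cast hkey
  rw [mul_assoc]
  omega
end

section
/- Let α, β : ℤ∖{0} → ℕ be finitely supported with |α| = |β| = 2 (where |α| = Σ_j α_j). Assume (i) the super-action preserving condition α_n + α_{−n} = β_n + β_{−n} for every n ∈ ℕ, and (ii) the zero-momentum condition Σ_{j∈ℤ∖{0}} j·(α_j − β_j) = 0. Then α = β. -/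
theorem exists_pair_finsupp (α : ℤ →₀ ℕ) (h : (α.sum fun _ k => k) = 2) :
    ∃ a b : ℤ, α = Finsupp.single a 1 + Finsupp.single b 1 := by
  have hc : Multiset.card (Finsupp.toMultiset α) = 2 := by
    rw [Finsupp.card_toMultiset]; exact h
  obtain ⟨a, b, hab⟩ := Multiset.card_eq_two.mp hc
  refine ⟨a, b, ?_⟩
  have h2 : Multiset.toFinsupp (Finsupp.toMultiset α) = Multiset.toFinsupp {a, b} := by rw [hab]
  rw [Finsupp.toMultiset_toFinsupp] at h2
  rw [h2, Multiset.insert_eq_cons, ← Multiset.singleton_add, Multiset.toFinsupp_add,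
    Multiset.toFinsupp_singleton, Multiset.toFinsupp_singleton]

theorem pair_count (x : ℤ) (hx : x ≠ 0) (n : ℕ) (hn : 0 < n) :
    ((if x = (n : ℤ) then 1 else 0) + (if x = -(n : ℤ) then 1 else 0) : ℕ)
      = if x.natAbs = n then 1 else 0 := by
  split_ifs <;> omega

theorem sum_pair (a b : ℤ) (s : Finset ℤ)
    (hs : (Finsupp.single a 1 + Finsupp.single b 1 : ℤ →₀ ℕ).support ⊆ s) :
    ∑ j ∈ s, (j : ℤ) * (((Finsupp.single a 1 + Finsupp.single b 1 : ℤ →₀ ℕ) j : ℤ)) = a + b := by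
  rw [← Finsupp.sum_of_support_subset _ hs (fun j k => (j : ℤ) * (k : ℤ)) (by simp)]
  rw [Finsupp.sum_add_index (by simp) (by intros; push_cast; ring),
    Finsupp.sum_single_index (by simp), Finsupp.sum_single_index (by simp)]
  push_cast; ring

set_option maxHeartbeats 1000000 in
theorem key_ints (a b c d : ℤ) (ha : a ≠ 0) (hb : b ≠ 0)
    (hsum : a + b = c + d)
    (hS : ∀ n : ℕ, 0 < n →
      ((if a.natAbs = n then 1 else 0) + (if b.natAbs = n then 1 else 0) : ℕ) =
      (if c.natAbs = n then 1 else 0) + (if d.natAbs = n then 1 else 0)) :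
    (a = c ∧ b = d) ∨ (a = d ∧ b = c) := by
  have h1 := hS a.natAbs (by omega)
  have h2 := hS b.natAbs (by omega)
  rw [if_pos rfl] at h1
  rw [if_pos rfl] at h2
  split_ifs at h1 h2 <;> omega

/-- A super-action preserving, zero-momentum multi-index of length `|α|=|β|=2`
is integrable: `α = β`. -/
theorem quartic_sap_momentum_integrable (α β : ℤ →₀ ℕ)
    (hα0 : α 0 = 0) (hβ0 : β 0 = 0)
    (hα2 : (α.sum fun _ k => k) = 2) (hβ2 : (β.sum fun _ k => k) = 2)
    (hSAP : ∀ n : ℕ, 0 < n → α (n : ℤ) + α (-(n : ℤ)) = β (n : ℤ) + β (-(n : ℤ)))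
    (hmom : ∑ j ∈ α.support ∪ β.support, (j : ℤ) * ((α j : ℤ) - (β j : ℤ)) = 0) :
    α = β := by
  obtain ⟨a, b, hab⟩ := exists_pair_finsupp α hα2
  obtain ⟨c, d, hcd⟩ := exists_pair_finsupp β hβ2
  subst hab hcd
  simp only [Finsupp.add_apply, Finsupp.single_apply] at hα0 hβ0
  have ha : a ≠ 0 := by intro h; subst h; simp at hα0
  have hb : b ≠ 0 := by intro h; subst h; simp at hα0
  have hc : c ≠ 0 := by intro h; subst h; simp at hβ0
  have hd : d ≠ 0 := by intro h; subst h; simp at hβ0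
  -- momentum
  have hmom' : a + b = c + d := by
    have hsplit : ∀ j : ℤ, (j : ℤ) *
        (((Finsupp.single a 1 + Finsupp.single b 1 : ℤ →₀ ℕ) j : ℤ)
          - ((Finsupp.single c 1 + Finsupp.single d 1 : ℤ →₀ ℕ) j : ℤ))
        = j * ((Finsupp.single a 1 + Finsupp.single b 1 : ℤ →₀ ℕ) j : ℤ)
          - j * ((Finsupp.single c 1 + Finsupp.single d 1 : ℤ →₀ ℕ) j : ℤ) := by
      intro j; ring
    rw [Finset.sum_congr rfl (fun j _ => hsplit j), Finset.sum_sub_distrib,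
      sum_pair a b _ Finset.subset_union_left,
      sum_pair c d _ Finset.subset_union_right] at hmom
    omega
  -- SAP in natAbs form
  have hS : ∀ n : ℕ, 0 < n →
      ((if a.natAbs = n then 1 else 0) + (if b.natAbs = n then 1 else 0) : ℕ) =
      (if c.natAbs = n then 1 else 0) + (if d.natAbs = n then 1 else 0) := by
    intro n hn
    have h := hSAP n hn
    simp only [Finsupp.add_apply, Finsupp.single_apply] at h
    rw [← pair_count a ha n hn, ← pair_count b hb n hn,
      ← pair_count c hc n hn, ← pair_count d hd n hn]
    omega
  rcases key_ints a b c d ha hb hmom' hS with ⟨h1, h2⟩ | ⟨h1, h2⟩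
  · rw [h1, h2]
  · rw [h1, h2, add_comm]
end
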